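/- For 0 < λ < λ̃, c > 0, σ² ≥ 0, define the detection error probability P_e(τ) on [σ² + c, ∞) by P_e(τ) = 1 + [λ̃ e^{-(τ-σ²)/λ̃}(1 - e^{c/λ̃}) + λ e^{-(τ-σ²)/λ}(e^{c/λ} - 1)]/c. Then P_e has a unique critical point at τ* = (λ̃λ/(λ̃-λ)) ln Δ + σ², where Δ = (e^{c/λ} - 1)/(e^{c/λ̃} - 1), i.e., P_e'(τ*) = 0. -/

import Mathlib

open Real

/-- Third-branch detection error probability has a unique critical point
at `τ* = (λ̃λ/(λ̃-λ)) ln Δ + σ²`. -/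
theorem stmt2 (lam lamt c σ2 : ℝ) (h0 : 0 < lam) (hll : lam < lamt) (hc : 0 < c)
    (hσ : 0 ≤ σ2) :
    let Pe : ℝ → ℝ := fun τ =>
      1 + (lamt * Real.exp (-(τ - σ2) / lamt) * (1 - Real.exp (c / lamt)) +
           lam * Real.exp (-(τ - σ2) / lam) * (Real.exp (c / lam) - 1)) / c
    let Δ : ℝ := (Real.exp (c / lam) - 1) / (Real.exp (c / lamt) - 1)
    let τs : ℝ := lamt * lam / (lamt - lam) * Real.log Δ + σ2
    deriv Pe τs = 0 ∧ ∀ τ, σ2 + c ≤ τ → deriv Pe τ = 0 → τ = τs := by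
  intro Pe Δ τs
  have hlt : 0 < lamt := h0.trans hll
  have hE1 : 1 < Real.exp (c / lamt) := by
    rw [show (1:ℝ) = Real.exp 0 by simp]
    exact Real.exp_lt_exp.mpr (div_pos hc hlt)
  have hE2 : 1 < Real.exp (c / lam) := by
    rw [show (1:ℝ) = Real.exp 0 by simp]
    exact Real.exp_lt_exp.mpr (div_pos hc h0)
  have hΔpos : 0 < Δ := div_pos (by linarith) (by linarith)
  have hd : ∀ τ : ℝ, HasDerivAt Pe
      ((lamt * (Real.exp (-(τ - σ2) / lamt) * (-1 / lamt)) * (1 - Real.exp (c / lamt)) +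
        lam * (Real.exp (-(τ - σ2) / lam) * (-1 / lam)) * (Real.exp (c / lam) - 1)) / c) τ := by
    intro τ
    have h1 : HasDerivAt (fun τ : ℝ => -(τ - σ2) / lamt) (-1 / lamt) τ :=
      ((hasDerivAt_id τ).sub_const σ2).neg.div_const lamt
    have h2 : HasDerivAt (fun τ : ℝ => -(τ - σ2) / lam) (-1 / lam) τ :=
      ((hasDerivAt_id τ).sub_const σ2).neg.div_const lam
    exact ((((h1.exp.const_mul lamt).mul_const _).add
      ((h2.exp.const_mul lam).mul_const _)).div_const c).const_add 1
  have hkey : ∀ τ : ℝ, deriv Pe τ = 0 ↔ (τ - σ2) * ((lamt - lam) / (lam * lamt)) = Real.log Δ := by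
    intro τ
    rw [(hd τ).deriv]
    have hsimp : (lamt * (Real.exp (-(τ - σ2) / lamt) * (-1 / lamt)) * (1 - Real.exp (c / lamt)) +
        lam * (Real.exp (-(τ - σ2) / lam) * (-1 / lam)) * (Real.exp (c / lam) - 1)) / c
        = ((Real.exp (c / lamt) - 1) * Real.exp (-(τ - σ2) / lamt)
           - (Real.exp (c / lam) - 1) * Real.exp (-(τ - σ2) / lam)) / c := by
      field_simp
      ring
    rw [hsimp, div_eq_zero_iff]
    have hcne : c ≠ 0 := ne_of_gt hc
    constructor
    · rintro (h | h)
      · -- (E1-1) exp u1 = (E2-1) exp u2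
        have heq : (Real.exp (c / lamt) - 1) * Real.exp (-(τ - σ2) / lamt)
            = (Real.exp (c / lam) - 1) * Real.exp (-(τ - σ2) / lam) := by linarith
        have hexp : Real.exp ((τ - σ2) * ((lamt - lam) / (lam * lamt))) = Δ := by
          have h2 : (Real.exp (c / lamt) - 1) ≠ 0 := by linarith
          rw [show (τ - σ2) * ((lamt - lam) / (lam * lamt))
              = -(τ - σ2) / lamt - -(τ - σ2) / lam by field_simp; ring,
            Real.exp_sub]
          simp only [Δ]
          rw [div_eq_div_iff (Real.exp_ne_zero _) h2]
          linear_combination heq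
        have := congrArg Real.log hexp
        rwa [Real.log_exp] at this
      · exact absurd h hcne
    · intro h
      left
      have hexp : Real.exp ((τ - σ2) * ((lamt - lam) / (lam * lamt))) = Δ := by
        rw [h, Real.exp_log hΔpos]
      have h2 : (Real.exp (c / lamt) - 1) ≠ 0 := by linarith
      have hrw : Real.exp ((τ - σ2) * ((lamt - lam) / (lam * lamt)))
          = Real.exp (-(τ - σ2) / lamt) / Real.exp (-(τ - σ2) / lam) := by
        rw [← Real.exp_sub]
        congr 1
        field_simp
        ring
      rw [hrw] at hexp
      have : Real.exp (-(τ - σ2) / lamt)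
          = Δ * Real.exp (-(τ - σ2) / lam) := by
        rw [← hexp]
        field_simp
      rw [this]
      simp only [Δ]
      field_simp
      ring
  have hτs : (τs - σ2) * ((lamt - lam) / (lam * lamt)) = Real.log Δ := by
    simp only [τs]
    have : lamt - lam ≠ 0 := ne_of_gt (by linarith)
    field_simp
    ring
  constructor
  · exact (hkey τs).mpr hτs
  · intro τ _ hder
    have h1 := (hkey τ).mp hder
    have h2 : (lamt - lam) / (lam * lamt) ≠ 0 := by
      apply div_ne_zero <;> [linarith; positivity]
    have := h1.trans hτs.symm
    have h3 : τ - σ2 = τs - σ2 := mul_right_cancel₀ h2 this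
    linarith
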